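/- For every positive integer u and every integer n ≥ 1, the (1,1) entry of the matrix (R_1 L_u)^n L_u equals H_n(u) = Σ_{i=0}^{n} (C(2n−i, i) + C(2n−1−i, i))·u^{n−i} and the (2,1) entry equals I_n(u) = Σ_{i=0}^{n−1} (C(2n−1−i, i) + C(2n−2−i, i))·u^{n−i}. -/

import Mathlib

open Matrix Finset

def Lm (u : ℕ) : Matrix (Fin 2) (Fin 2) ℕ := !![1, 0; u, 1]
def Rm (v : ℕ) : Matrix (Fin 2) (Fin 2) ℕ := !![1, v; 0, 1]

/-- The product of the matrices corresponding to a word: `false ↦ L_u`, `true ↦ R_v`. -/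
def wordProd (u v : ℕ) (w : List Bool) : Matrix (Fin 2) (Fin 2) ℕ :=
  (w.map (fun b => if b then Rm v else Lm u)).prod

/-- μ of a matrix: maximum of the four entries. -/
def matMax (M : Matrix (Fin 2) (Fin 2) ℕ) : ℕ :=
  max (max (M 0 0) (M 0 1)) (max (M 1 0) (M 1 1))

/-- μ(𝒯^{(u,v)}(I₂;n)): maximum of μ over all products of exactly n matrices each L_u or R_v. -/
def levelMax (u v n : ℕ) : ℕ :=
  Finset.univ.sup (fun w : Fin n → Bool => matMax (wordProd u v (List.ofFn w)))

def Hs (u n : ℕ) : ℕ :=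
  ∑ i ∈ Finset.range (n + 1),
    ((2 * n - i).choose i + (2 * n - 1 - i).choose i) * u ^ (n - i)

def Is (u n : ℕ) : ℕ :=
  ∑ i ∈ Finset.range n,
    ((2 * n - 1 - i).choose i + (2 * n - 2 - i).choose i) * u ^ (n - i)

lemma key1 (u n : ℕ) (hn : 1 ≤ n) : Is u (n + 1) = u * Hs u n + Is u n := by
  unfold Is Hs
  rw [Finset.mul_sum]
  rw [Finset.sum_range_succ' (fun i => ((2*(n+1) - 1 - i).choose i + (2*(n+1) - 2 - i).choose i) * u ^ (n+1 - i))]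
  rw [Finset.sum_range_succ' (fun i => u * (((2*n - i).choose i + (2*n - 1 - i).choose i) * u ^ (n - i)))]
  have hterm : ∀ i ∈ Finset.range n,
      ((2*(n+1) - 1 - (i+1)).choose (i+1) + (2*(n+1) - 2 - (i+1)).choose (i+1)) * u ^ (n+1 - (i+1))
      = u * (((2*n - (i+1)).choose (i+1) + (2*n - 1 - (i+1)).choose (i+1)) * u ^ (n - (i+1)))
        + ((2*n - 1 - i).choose i + (2*n - 2 - i).choose i) * u ^ (n - i) := by
    intro i hi
    rw [Finset.mem_range] at hi
    have e1 : 2*(n+1) - 1 - (i+1) = 2*n - i := by omega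
    have e2 : 2*(n+1) - 2 - (i+1) = 2*n - 1 - i := by omega
    have e3 : n + 1 - (i+1) = n - i := by omega
    have e4 : 2*n - (i+1) = 2*n - 1 - i := by omega
    have e5 : 2*n - 1 - (i+1) = 2*n - 2 - i := by omega
    have p1 : 2*n - i = (2*n - 1 - i) + 1 := by omega
    have p2 : 2*n - 1 - i = (2*n - 2 - i) + 1 := by omega
    have e6 : u ^ (n - i) = u * u ^ (n - (i+1)) := by
      rw [← pow_succ']
      congr 1; omega
    rw [e1, e2, e3, e4, e5, p1, p2, Nat.choose_succ_succ, Nat.choose_succ_succ, ← p2, e6]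
    ring
  rw [Finset.sum_congr rfl hterm, Finset.sum_add_distrib]
  have h0 : ((2*(n+1) - 1 - 0).choose 0 + (2*(n+1) - 2 - 0).choose 0) * u ^ (n+1 - 0)
      = u * (((2*n - 0).choose 0 + (2*n - 1 - 0).choose 0) * u ^ (n - 0)) := by
    simp [pow_succ]
    ring
  rw [h0]
  ring

lemma key2 (u n : ℕ) (hn : 1 ≤ n) : Hs u (n + 1) = Hs u n + Is u (n + 1) := by
  unfold Is Hs
  rw [Finset.sum_range_succ' (fun i => ((2*(n+1) - i).choose i + (2*(n+1) - 1 - i).choose i) * u ^ (n+1 - i))]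
  rw [Finset.sum_range_succ' (fun i => ((2*(n+1) - 1 - i).choose i + (2*(n+1) - 2 - i).choose i) * u ^ (n+1 - i))]
  have hterm : ∀ i ∈ Finset.range (n+1),
      ((2*(n+1) - (i+1)).choose (i+1) + (2*(n+1) - 1 - (i+1)).choose (i+1)) * u ^ (n+1 - (i+1))
      = ((2*n - i).choose i + (2*n - 1 - i).choose i) * u ^ (n - i)
        + ((2*(n+1) - 1 - (i+1)).choose (i+1) + (2*(n+1) - 2 - (i+1)).choose (i+1)) * u ^ (n+1 - (i+1)) := by
    intro i hi
    rw [Finset.mem_range] at hi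
    have e1 : 2*(n+1) - (i+1) = 2*n + 1 - i := by omega
    have e2 : 2*(n+1) - 1 - (i+1) = 2*n - i := by omega
    have e3 : n + 1 - (i+1) = n - i := by omega
    have e4 : 2*(n+1) - 2 - (i+1) = 2*n - 1 - i := by omega
    have p1 : 2*n + 1 - i = (2*n - i) + 1 := by omega
    have p2 : 2*n - i = (2*n - 1 - i) + 1 := by omega
    rw [e1, e2, e3, e4, p1]
    nth_rewrite 2 [p2]
    rw [Nat.choose_succ_succ, Nat.choose_succ_succ]
    ring
  rw [Finset.sum_congr rfl hterm, Finset.sum_add_distrib,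
    Finset.sum_range_succ (fun i => ((2*(n+1) - 1 - (i+1)).choose (i+1) + (2*(n+1) - 2 - (i+1)).choose (i+1)) * u ^ (n+1 - (i+1)))]
  have hz : ((2*(n+1) - 1 - (n+1)).choose (n+1) + (2*(n+1) - 2 - (n+1)).choose (n+1)) * u ^ (n+1 - (n+1)) = 0 := by
    rw [Nat.choose_eq_zero_of_lt (by omega), Nat.choose_eq_zero_of_lt (by omega)]
    simp
  rw [hz]
  simp
  ring

lemma hM (u : ℕ) : Rm 1 * Lm u = !![1 + u, 1; u, 1] := by
  ext i j
  fin_cases i <;> fin_cases j <;>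
    simp [Rm, Lm, Matrix.mul_apply, Fin.sum_univ_two]

theorem stmt12 (u : ℕ) (hu : 1 ≤ u) (n : ℕ) (hn : 1 ≤ n) :
    ((Rm 1 * Lm u) ^ n * Lm u) 0 0 =
      ∑ i ∈ Finset.range (n + 1),
        ((2 * n - i).choose i + (2 * n - 1 - i).choose i) * u ^ (n - i) ∧
    ((Rm 1 * Lm u) ^ n * Lm u) 1 0 =
      ∑ i ∈ Finset.range n,
        ((2 * n - 1 - i).choose i + (2 * n - 2 - i).choose i) * u ^ (n - i) := by
  suffices h : ((Rm 1 * Lm u) ^ n * Lm u) 0 0 = Hs u n ∧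
      ((Rm 1 * Lm u) ^ n * Lm u) 1 0 = Is u n from h
  induction n, hn using Nat.le_induction with
  | base =>
    constructor
    · show ((Rm 1 * Lm u) ^ 1 * Lm u) 0 0 = Hs u 1
      rw [pow_one, hM]
      simp [Hs, Lm, Matrix.mul_apply, Fin.sum_univ_two, Finset.sum_range_succ]
      ring
    · show ((Rm 1 * Lm u) ^ 1 * Lm u) 1 0 = Is u 1
      rw [pow_one, hM]
      simp [Is, Lm, Matrix.mul_apply, Fin.sum_univ_two, Finset.sum_range_succ]
      ring
  | succ n hn ih =>
    obtain ⟨ih1, ih2⟩ := ih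
    have hm : (Rm 1 * Lm u) ^ (n + 1) * Lm u
        = (Rm 1 * Lm u) * ((Rm 1 * Lm u) ^ n * Lm u) := by
      rw [pow_succ', mul_assoc]
    have e00 : ∀ N : Matrix (Fin 2) (Fin 2) ℕ,
        (Rm 1 * Lm u * N) 0 0 = (1 + u) * N 0 0 + N 1 0 := by
      intro N
      rw [hM]
      simp [Matrix.mul_apply, Fin.sum_univ_two]
    have e10 : ∀ N : Matrix (Fin 2) (Fin 2) ℕ,
        (Rm 1 * Lm u * N) 1 0 = u * N 0 0 + N 1 0 := by
      intro N
      rw [hM]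
      simp [Matrix.mul_apply, Fin.sum_univ_two]
    constructor
    · rw [hm, e00, ih1, ih2, key2 u n hn, key1 u n hn]
      ring
    · rw [hm, e10, ih1, ih2, key1 u n hn]
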